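/- Let C be a Karoubian triangulated category with a weight structure w, let i ∈ ℤ, and let M belong to the envelope of a class {M_j}_{j∈J} of objects of C (the envelope is the smallest class containing the M_j that is closed under extensions, retracts, and contains 0). Fix for each j an (i−1)-weight decomposition w_{≤i−1}M_j → M_j → w_{≥i}M_j. Then M ∈ C_{w≥i} if and only if Hom(w_{≤i−1}M_j, M) = 0 for all j. -/

import Mathlib

open CategoryTheory CategoryTheory.Limits CategoryTheory.Pretriangulated

universe v u v₂ u₂

/-- `X` is a retract of `Y`: the identity of `X` factors through `Y`. -/
def IsRetract {C : Type u} [Category.{v} C] (X Y : C) : Prop :=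
  ∃ (i : X ⟶ Y) (r : Y ⟶ X), i ≫ r = 𝟙 X

variable (C : Type u) [Category.{v} C] [HasZeroObject C] [Preadditive C] [HasShift C ℤ]
  [∀ n : ℤ, (shiftFunctor C n).Additive] [Pretriangulated C]

/-- A weight structure on a triangulated category `C`, given by the classes
`LE = C_{w≤0}` and `GE = C_{w≥0}`. -/
structure WeightStructure where
  LE : Set C
  GE : Set C
  retract_mem_LE : ∀ ⦃X Y : C⦄, IsRetract X Y → Y ∈ LE → X ∈ LE
  retract_mem_GE : ∀ ⦃X Y : C⦄, IsRetract X Y → Y ∈ GE → X ∈ GE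
  shift_LE : ∀ X ∈ LE, X⟦(-1 : ℤ)⟧ ∈ LE
  shift_GE : ∀ X ∈ GE, X⟦(1 : ℤ)⟧ ∈ GE
  orthogonal : ∀ ⦃X Y : C⦄, X ∈ LE → Y ∈ GE → ∀ f : X ⟶ Y⟦(1 : ℤ)⟧, f = 0
  exists_decomp : ∀ M : C, ∃ (B A : C) (f : B ⟶ M) (g : M ⟶ A) (h : A ⟶ B⟦(1 : ℤ)⟧),
    (Triangle.mk f g h ∈ distTriang C) ∧ B ∈ LE ∧ A⟦(-1 : ℤ)⟧ ∈ GE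

namespace WeightStructure

variable {C}

/-- `C_{w≤n} = C_{w≤0}[n]`. -/
def le (w : WeightStructure C) (n : ℤ) : Set C := {X : C | X⟦(-n)⟧ ∈ w.LE}

/-- `C_{w≥n} = C_{w≥0}[n]`. -/
def ge (w : WeightStructure C) (n : ℤ) : Set C := {X : C | X⟦(-n)⟧ ∈ w.GE}

/-- `C_{w=n} = C_{w≤n} ∩ C_{w≥n}`. -/
def heart (w : WeightStructure C) (n : ℤ) : Set C := w.le n ∩ w.ge n

end WeightStructure

variable {C}

/-- The envelope of a class `D`: the smallest class containing `D` and all zero objects that is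
closed under extensions and retracts. -/
inductive Envelope (D : Set C) : C → Prop
  | of (X : C) (hX : X ∈ D) : Envelope D X
  | zero (Z : C) (hZ : IsZero Z) : Envelope D Z
  | ext (T : Triangle C) (hT : T ∈ distTriang C)
      (h₁ : Envelope D T.obj₁) (h₃ : Envelope D T.obj₃) : Envelope D T.obj₂
  | retract (X Y : C) (h : IsRetract X Y) (hY : Envelope D Y) : Envelope D X

section Auxiliary

lemma isRetract_shift {X Y : C} (hXY : IsRetract X Y) (n : ℤ) : IsRetract (X⟦n⟧) (Y⟦n⟧) := by
  obtain ⟨ι, r, hir⟩ := hXY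
  refine ⟨ι⟦n⟧', r⟦n⟧', ?_⟩
  rw [← Functor.map_comp, hir]
  exact (shiftFunctor C n).map_id X

lemma isRetract_of_iso_left {X X' Y : C} (e : X ≅ X') (hXY : IsRetract X' Y) : IsRetract X Y := by
  obtain ⟨ι, r, hir⟩ := hXY
  exact ⟨e.hom ≫ ι, r ≫ e.inv, by
    rw [Category.assoc, ← Category.assoc ι r, hir, Category.id_comp, e.hom_inv_id]⟩

namespace WeightStructure

variable (w : WeightStructure C)

lemma mem_LE_of_iso {X Y : C} (e : X ≅ Y) (hY : Y ∈ w.LE) : X ∈ w.LE :=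
  w.retract_mem_LE ⟨e.hom, e.inv, e.hom_inv_id⟩ hY

lemma mem_GE_of_iso {X Y : C} (e : X ≅ Y) (hY : Y ∈ w.GE) : X ∈ w.GE :=
  w.retract_mem_GE ⟨e.hom, e.inv, e.hom_inv_id⟩ hY

lemma le_shift {X : C} {n : ℤ} (hX : X ∈ w.le n) (k m : ℤ) (hm : m = n + k) :
    X⟦k⟧ ∈ w.le m :=
  w.mem_LE_of_iso (((shiftFunctorAdd' C k (-m) (-n) (by omega)).app X).symm) hX

lemma LE_shift {X : C} (hX : X ∈ w.LE) (n : ℤ) : X⟦n⟧ ∈ w.le n :=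
  w.mem_LE_of_iso ((shiftFunctorCompIsoId C n (-n) (by ring)).app X) hX

lemma le_mono_one {X : C} {n : ℤ} (hX : X ∈ w.le n) (m : ℤ) (hm : m = n + 1) :
    X ∈ w.le m :=
  w.mem_LE_of_iso ((shiftFunctorAdd' C (-n) (-1) (-m) (by omega)).app X) (w.shift_LE _ hX)

lemma isZero_mem_le {X : C} (hX : IsZero X) (n : ℤ) : X ∈ w.le n := by
  obtain ⟨B, A, f, g, h, hd, hB, hA⟩ := w.exists_decomp X
  have hz : IsZero (X⟦(-n : ℤ)⟧) := (shiftFunctor C (-n)).map_isZero hX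
  exact w.retract_mem_LE ⟨0, 0, hz.eq_of_src _ _⟩ hB

lemma hom_eq_zero {X Y : C} {n m : ℤ} (hX : X ∈ w.le n) (hY : Y ∈ w.ge m) (hnm : m = n + 1)
    (φ : X ⟶ Y) : φ = 0 := by
  apply (shiftFunctor C (-n)).map_injective
  have e := shiftFunctorAdd' C (-m) 1 (-n) (by omega)
  have h0 : (φ⟦(-n)⟧' ≫ e.hom.app Y) = 0 := w.orthogonal hX hY _
  have hrw : (φ⟦(-n)⟧' ≫ e.hom.app Y) ≫ e.inv.app Y = φ⟦(-n)⟧' := by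
    rw [Category.assoc, Iso.hom_inv_id_app, Category.comp_id]
  rw [Functor.map_zero, ← hrw, h0, Limits.zero_comp]

lemma mem_LE_of_orth {X : C} (hX : ∀ Y, Y ∈ w.GE → ∀ φ : X ⟶ Y⟦(1 : ℤ)⟧, φ = 0) :
    X ∈ w.LE := by
  obtain ⟨B, A, f, g, h, hd, hB, hA⟩ := w.exists_decomp X
  have hg : g = 0 := by
    have e := shiftFunctorCompIsoId C (-1 : ℤ) 1 (by ring)
    have h0 := hX _ hA (g ≫ e.inv.app A)
    have hrw : g = (g ≫ e.inv.app A) ≫ e.hom.app A := by simp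
    rw [hrw, h0, Limits.zero_comp]
  obtain ⟨ι, hι⟩ := Triangle.coyoneda_exact₂ _ hd (𝟙 X)
    (by show 𝟙 X ≫ g = 0; rw [hg, Limits.comp_zero])
  exact w.retract_mem_LE ⟨ι, f, hι.symm⟩ hB

lemma LE_ext (T : Triangle C) (hT : T ∈ distTriang C)
    (h₁ : T.obj₁ ∈ w.LE) (h₃ : T.obj₃ ∈ w.LE) : T.obj₂ ∈ w.LE := by
  apply w.mem_LE_of_orth
  intro Y hY φ
  obtain ⟨ψ, hψ⟩ := Triangle.yoneda_exact₂ _ hT φ (w.orthogonal h₁ hY _)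
  rw [hψ, w.orthogonal h₃ hY ψ, Limits.comp_zero]

lemma le_ext (T : Triangle C) (hT : T ∈ distTriang C) {n : ℤ}
    (h₁ : T.obj₁ ∈ w.le n) (h₃ : T.obj₃ ∈ w.le n) : T.obj₂ ∈ w.le n :=
  w.LE_ext _ (Triangle.shift_distinguished T hT (-n)) h₁ h₃

end WeightStructure

end Auxiliary

theorem stmt_7 (w : WeightStructure C) [IsIdempotentComplete C] (i : ℤ)
    {J : Type*} (Mf : J → C) (M : C) (hM : Envelope (Set.range Mf) M)
    (L G : J → C) (f : ∀ j, L j ⟶ Mf j) (g : ∀ j, Mf j ⟶ G j)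
    (h : ∀ j, G j ⟶ (L j)⟦(1 : ℤ)⟧)
    (hT : ∀ j, Triangle.mk (f j) (g j) (h j) ∈ distTriang C)
    (hL : ∀ j, L j ∈ w.le (i - 1)) (hG : ∀ j, G j ∈ w.ge i) :
    M ∈ w.ge i ↔ ∀ j, ∀ φ : L j ⟶ M, φ = 0 := by
  constructor
  · intro hMge j φ
    exact w.hom_eq_zero (hL j) hMge (by ring) φ
  · intro H
    -- Key factorization statement, proved by induction on the envelope.
    have key : ∀ (N : C), Envelope (Set.range Mf) N → ∀ (B : C), B ∈ w.le (i - 1) →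
        ∀ φ : B ⟶ N, ∃ (E : C) (α : B ⟶ E) (β : E ⟶ N),
          (∀ ψ : E ⟶ M, ψ = 0) ∧ E ∈ w.le (i - 1) ∧ φ = α ≫ β := by
      intro N hN
      induction hN with
      | of X hX =>
        obtain ⟨j, rfl⟩ := hX
        intro B hB φ
        have h0 : φ ≫ g j = 0 := w.hom_eq_zero hB (hG j) (by ring) _
        obtain ⟨α, hα⟩ := Triangle.coyoneda_exact₂ _ (hT j) φ h0
        exact ⟨L j, α, f j, fun ψ => H j ψ, hL j, hα⟩
      | zero Z₀ hZ₀ =>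
        intro B hB φ
        exact ⟨Z₀, φ, 𝟙 _, fun ψ => hZ₀.eq_of_src ψ 0, w.isZero_mem_le hZ₀ _,
          (Category.comp_id φ).symm⟩
      | ext T' hT' henv₁ henv₃ ih₁ ih₃ =>
        intro B hB φ
        obtain ⟨E₃, a, b, hE₃M, hE₃le, hab⟩ := ih₃ B hB (φ ≫ T'.mor₂)
        obtain ⟨K, s, t, hK⟩ := distinguished_cocone_triangle a
        have haδ : a ≫ (b ≫ T'.mor₃) = 0 := by
          rw [← Category.assoc, ← hab, Category.assoc,
            comp_distTriang_mor_zero₂₃ _ hT', Limits.comp_zero]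
        obtain ⟨δK, hδK⟩ := Triangle.yoneda_exact₂ _ hK (b ≫ T'.mor₃) haδ
        have hKle : K ∈ w.le i := by
          refine w.le_ext _ (rot_of_distTriang _ hK) ?_ ?_
          · exact w.le_mono_one hE₃le i (by ring)
          · exact w.le_shift hB 1 i (by ring)
        have hK1 : K⟦(-1 : ℤ)⟧ ∈ w.le (i - 1) := w.le_shift hKle (-1) (i - 1) (by ring)
        obtain ⟨E₁, c', d', hE₁M, hE₁le, hcd⟩ := ih₁ _ hK1
          (δK⟦(-1 : ℤ)⟧' ≫ (shiftFunctorCompIsoId C (1 : ℤ) (-1) (by ring)).hom.app T'.obj₁)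
        set c : K ⟶ E₁⟦(1 : ℤ)⟧ :=
          (shiftFunctorCompIsoId C (-1 : ℤ) 1 (by ring)).inv.app K ≫ c'⟦(1 : ℤ)⟧' with hc
        have hcδ : c ≫ d'⟦(1 : ℤ)⟧' = δK := by
          rw [hc, Category.assoc, ← Functor.map_comp, ← hcd, Functor.map_comp]
          rw [shift_shiftFunctorCompIsoId_hom_app (1 : ℤ) (-1) (by ring) T'.obj₁]
          have hnat : δK ≫ (shiftFunctorCompIsoId C (-1 : ℤ) 1 (by ring)).inv.app _ =
              (shiftFunctorCompIsoId C (-1 : ℤ) 1 (by ring)).inv.app K ≫ δK⟦(-1 : ℤ)⟧'⟦(1 : ℤ)⟧' :=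
            (shiftFunctorCompIsoId C (-1 : ℤ) 1 (by ring)).inv.naturality δK
          rw [← Category.assoc, ← hnat]
          exact (Category.assoc _ _ _).trans ((congrArg (δK ≫ ·) (Iso.inv_hom_id_app (shiftFunctorCompIsoId C (-1 : ℤ) 1 (by ring)) (T'.obj₁⟦(1 : ℤ)⟧))).trans
            (Category.comp_id _))
        obtain ⟨E, e, p, hE⟩ := distinguished_cocone_triangle₂ (s ≫ c)
        have comm : (Triangle.mk e p (s ≫ c)).mor₃ ≫ d'⟦(1 : ℤ)⟧' = b ≫ T'.mor₃ := by
          show (s ≫ c) ≫ d'⟦(1 : ℤ)⟧' = b ≫ T'.mor₃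
          rw [Category.assoc, hcδ]
          exact hδK.symm
        obtain ⟨q, hq₁, hq₂⟩ :=
          complete_distinguished_triangle_morphism₂ _ T' hE hT' d' b comm
        change e ≫ q = d' ≫ T'.mor₁ at hq₁
        change p ≫ b = q ≫ T'.mor₂ at hq₂
        have has : a ≫ (s ≫ c) = 0 := by
          have h0 : a ≫ s = 0 := comp_distTriang_mor_zero₁₂ _ hK
          rw [← Category.assoc, h0, Limits.zero_comp]
        obtain ⟨ρ, hρ⟩ := Triangle.coyoneda_exact₃ _ hE a has
        change a = ρ ≫ p at hρ
        have hσ0 : (φ - ρ ≫ q) ≫ T'.mor₂ = 0 := by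
          rw [Preadditive.sub_comp, hab, Category.assoc, ← hq₂]
          exact sub_eq_zero.mpr ((congrArg (· ≫ b) hρ).trans (Category.assoc _ _ _))
        obtain ⟨σ, hσ⟩ := Triangle.coyoneda_exact₂ _ hT' (φ - ρ ≫ q) hσ0
        obtain ⟨E₀, c₀, d₀, hE₀M, hE₀le, hcd₀⟩ := ih₁ B hB σ
        have hEM : ∀ ψ' : E ⟶ M, ψ' = 0 := by
          intro ψ'
          obtain ⟨ψ'', hψ''⟩ := Triangle.yoneda_exact₂ _ hE ψ' (hE₁M _)
          rw [hψ'', hE₃M ψ'']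
          exact Limits.comp_zero
        refine ⟨E ⊞ E₀, biprod.lift ρ c₀, biprod.desc q (d₀ ≫ T'.mor₁), ?_, ?_, ?_⟩
        · intro ψ
          apply biprod.hom_ext' <;> simp only [hEM, hE₀M, Limits.comp_zero]
        · have hEle : E ∈ w.le (i - 1) := w.le_ext _ hE hE₁le hE₃le
          exact w.le_ext _ (binaryBiproductTriangle_distinguished E E₀) hEle hE₀le
        · exact (sub_eq_iff_eq_add.mp (hσ.trans (by rw [hcd₀, Category.assoc] :
            σ ≫ T'.mor₁ = c₀ ≫ d₀ ≫ T'.mor₁))).trans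
            ((add_comm _ _).trans biprod.lift_desc.symm)
      | retract X Y hXY hY ih =>
        intro B hB φ
        obtain ⟨ι, r, hir⟩ := hXY
        obtain ⟨E, α, β, h1, h2, h3⟩ := ih B hB (φ ≫ ι)
        exact ⟨E, α, β ≫ r, h1, h2, by
          rw [← Category.assoc, ← h3, Category.assoc, hir, Category.comp_id]⟩
    have key0 : ∀ (B : C), B ∈ w.le (i - 1) → ∀ φ : B ⟶ M, φ = 0 := by
      intro B hB φ
      obtain ⟨E, α, β, h1, _, h3⟩ := key M hM B hB φ
      rw [h3, h1 β, Limits.comp_zero]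
    obtain ⟨B, A, f₀, g₀, h₀, hd, hB, hA⟩ := w.exists_decomp (M⟦(1 - i : ℤ)⟧)
    have hf₀ : f₀ = 0 := by
      have hB' : B⟦(i - 1 : ℤ)⟧ ∈ w.le (i - 1) := w.LE_shift hB (i - 1)
      have h0 := key0 _ hB'
        (f₀⟦(i - 1 : ℤ)⟧' ≫ (shiftFunctorCompIsoId C (1 - i : ℤ) (i - 1) (by ring)).hom.app M)
      apply (shiftFunctor C (i - 1 : ℤ)).map_injective
      have hrw : f₀⟦(i - 1 : ℤ)⟧' = (f₀⟦(i - 1 : ℤ)⟧' ≫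
          (shiftFunctorCompIsoId C (1 - i : ℤ) (i - 1) (by ring)).hom.app M) ≫
          (shiftFunctorCompIsoId C (1 - i : ℤ) (i - 1) (by ring)).inv.app M := by simp
      rw [Functor.map_zero, hrw, h0, Limits.zero_comp]
    obtain ⟨r, hr⟩ := Triangle.yoneda_exact₂ _ hd (𝟙 (M⟦(1 - i : ℤ)⟧))
      (by show f₀ ≫ 𝟙 _ = 0; rw [hf₀, Limits.zero_comp])
    have hret : IsRetract ((M⟦(1 - i : ℤ)⟧)⟦(-1 : ℤ)⟧) (A⟦(-1 : ℤ)⟧) :=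
      isRetract_shift ⟨g₀, r, hr.symm⟩ (-1)
    have hret' : IsRetract (M⟦(-i : ℤ)⟧) (A⟦(-1 : ℤ)⟧) :=
      isRetract_of_iso_left ((shiftFunctorAdd' C (1 - i : ℤ) (-1) (-i) (by ring)).app M) hret
    exact w.retract_mem_GE hret' hA
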